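/- If the initial field is linear, u_0(x) = α + β(x − x_j), then the projection ⟨z_j, u_0⟩ with the leading projection vector z_j reproduces the grid value exactly: ⟨z_j, u_0⟩ = α = u_0(x_j). -/

import Mathlib

set_option maxHeartbeats 2000000


open intervalIntegral

lemma cubic_int (a b c d s t : ℝ) :
    (∫ x in s..t, (a + b*x + c*x^2 + d*x^3))
      = a*(t-s) + b*(t^2-s^2)/2 + c*(t^3-s^3)/3 + d*(t^4-s^4)/4 := by
  have : ∀ x ∈ Set.uIcc s t,
      HasDerivAt (fun x : ℝ => a*x + b*x^2/2 + c*x^3/3 + d*x^4/4)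
        (a + b*x + c*x^2 + d*x^3) x := by
    intro x _
    have := ((hasDerivAt_id x).const_mul a).add
      ((((hasDerivAt_pow 2 x).const_mul b).div_const 2).add
        ((((hasDerivAt_pow 3 x).const_mul c).div_const 3).add
          (((hasDerivAt_pow 4 x).const_mul d).div_const 4)))
    convert this using 1
    · rfl
    · rfl
    · funext y; simp only [id, Pi.add_apply]; ring
    · push_cast; ring
  rw [intervalIntegral.integral_eq_sub_of_hasDerivAt this (by
    apply Continuous.intervalIntegrable; continuity)]
  ring

/-- Projecting a linear initial field `u₀(x) = α + β(x − x_j)` with the leading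
projection vector `z_j` reproduces the grid value: `⟨z_j, u₀⟩ = α`. -/
theorem stmt_6 (h α β : ℝ) (hh : 0 < h) (j : ℤ) :
    (1/h) * ((∫ x in ((j : ℝ) * h - h/2)..((j : ℝ) * h + h/2),
        (7/6 - ((x - (j : ℝ) * h)/h)^2) * (α + β * (x - (j : ℝ) * h)))
      + (∫ x in (((j : ℝ) - 1) * h - h/2)..(((j : ℝ) - 1) * h + h/2),
        (-1/12 + ((x - ((j : ℝ) - 1) * h)/h)/2 + ((x - ((j : ℝ) - 1) * h)/h)^2/2)
          * (α + β * (x - (j : ℝ) * h)))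
      + (∫ x in (((j : ℝ) + 1) * h - h/2)..(((j : ℝ) + 1) * h + h/2),
        (-1/12 - ((x - ((j : ℝ) + 1) * h)/h)/2 + ((x - ((j : ℝ) + 1) * h)/h)^2/2)
          * (α + β * (x - (j : ℝ) * h))))
    = α := by
  have hne : h ≠ 0 := ne_of_gt hh
  have e1 : (fun x : ℝ => (7/6 - ((x - (j : ℝ) * h)/h)^2) * (α + β * (x - (j : ℝ) * h)))
      = fun x : ℝ =>
        ((7/6)*α + (α/h^2)*((j:ℝ)*h)^2*(-1) + (7/6)*β*(-((j:ℝ)*h)) + (β/h^2)*((j:ℝ)*h)^3)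
        + ((7/6)*β + 2*(α/h^2)*((j:ℝ)*h) - 3*(β/h^2)*((j:ℝ)*h)^2)*x
        + (-(α/h^2) + 3*(β/h^2)*((j:ℝ)*h))*x^2 + (-(β/h^2))*x^3 := by
    funext x; field_simp; ring
  have e2 : (fun x : ℝ => (-1/12 + ((x - ((j : ℝ) - 1) * h)/h)/2 + ((x - ((j : ℝ) - 1) * h)/h)^2/2)
          * (α + β * (x - (j : ℝ) * h)))
      = fun x : ℝ =>
        ((-1/12 - ((j:ℝ)-1)/2 + ((j:ℝ)-1)^2/2)*(α - β*(j:ℝ)*h))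
        + (((-1/12 - ((j:ℝ)-1)/2 + ((j:ℝ)-1)^2/2)*β + (1/(2*h) - ((j:ℝ)-1)/h)*(α - β*(j:ℝ)*h)))*x
        + ((1/(2*h) - ((j:ℝ)-1)/h)*β + (1/(2*h^2))*(α - β*(j:ℝ)*h))*x^2
        + ((1/(2*h^2))*β)*x^3 := by
    funext x; field_simp; ring
  have e3 : (fun x : ℝ => (-1/12 - ((x - ((j : ℝ) + 1) * h)/h)/2 + ((x - ((j : ℝ) + 1) * h)/h)^2/2)
          * (α + β * (x - (j : ℝ) * h)))
      = fun x : ℝ =>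
        ((-1/12 + ((j:ℝ)+1)/2 + ((j:ℝ)+1)^2/2)*(α - β*(j:ℝ)*h))
        + (((-1/12 + ((j:ℝ)+1)/2 + ((j:ℝ)+1)^2/2)*β + (-1/(2*h) - ((j:ℝ)+1)/h)*(α - β*(j:ℝ)*h)))*x
        + ((-1/(2*h) - ((j:ℝ)+1)/h)*β + (1/(2*h^2))*(α - β*(j:ℝ)*h))*x^2
        + ((1/(2*h^2))*β)*x^3 := by
    funext x; field_simp; ring
  rw [show (∫ x in ((j : ℝ) * h - h/2)..((j : ℝ) * h + h/2),
        (7/6 - ((x - (j : ℝ) * h)/h)^2) * (α + β * (x - (j : ℝ) * h)))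
      = ∫ x in ((j : ℝ) * h - h/2)..((j : ℝ) * h + h/2),
        (((7/6)*α + (α/h^2)*((j:ℝ)*h)^2*(-1) + (7/6)*β*(-((j:ℝ)*h)) + (β/h^2)*((j:ℝ)*h)^3)
        + ((7/6)*β + 2*(α/h^2)*((j:ℝ)*h) - 3*(β/h^2)*((j:ℝ)*h)^2)*x
        + (-(α/h^2) + 3*(β/h^2)*((j:ℝ)*h))*x^2 + (-(β/h^2))*x^3) from by rw [e1]]
  rw [show (∫ x in (((j : ℝ) - 1) * h - h/2)..(((j : ℝ) - 1) * h + h/2),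
        (-1/12 + ((x - ((j : ℝ) - 1) * h)/h)/2 + ((x - ((j : ℝ) - 1) * h)/h)^2/2)
          * (α + β * (x - (j : ℝ) * h)))
      = ∫ x in (((j : ℝ) - 1) * h - h/2)..(((j : ℝ) - 1) * h + h/2),
        (((-1/12 - ((j:ℝ)-1)/2 + ((j:ℝ)-1)^2/2)*(α - β*(j:ℝ)*h))
        + (((-1/12 - ((j:ℝ)-1)/2 + ((j:ℝ)-1)^2/2)*β + (1/(2*h) - ((j:ℝ)-1)/h)*(α - β*(j:ℝ)*h)))*x
        + ((1/(2*h) - ((j:ℝ)-1)/h)*β + (1/(2*h^2))*(α - β*(j:ℝ)*h))*x^2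
        + ((1/(2*h^2))*β)*x^3) from by rw [e2]]
  rw [show (∫ x in (((j : ℝ) + 1) * h - h/2)..(((j : ℝ) + 1) * h + h/2),
        (-1/12 - ((x - ((j : ℝ) + 1) * h)/h)/2 + ((x - ((j : ℝ) + 1) * h)/h)^2/2)
          * (α + β * (x - (j : ℝ) * h)))
      = ∫ x in (((j : ℝ) + 1) * h - h/2)..(((j : ℝ) + 1) * h + h/2),
        (((-1/12 + ((j:ℝ)+1)/2 + ((j:ℝ)+1)^2/2)*(α - β*(j:ℝ)*h))
        + (((-1/12 + ((j:ℝ)+1)/2 + ((j:ℝ)+1)^2/2)*β + (-1/(2*h) - ((j:ℝ)+1)/h)*(α - β*(j:ℝ)*h)))*x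
        + ((-1/(2*h) - ((j:ℝ)+1)/h)*β + (1/(2*h^2))*(α - β*(j:ℝ)*h))*x^2
        + ((1/(2*h^2))*β)*x^3) from by rw [e3]]
  rw [cubic_int, cubic_int, cubic_int]
  field_simp
  ring
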